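/- arXiv:1109.2745 — 2 statements merged into one kernel-verified Lean document; each statement's English description precedes it below -/
import Mathlib

section
/- On a nearly cosymplectic manifold, for all tangent vectors X and Y, (∇_{θX} θ)(θY) = -(∇_X θ)(Y) + g(Y,ξ) ∇_{θX} ξ + g(X,ξ) θ(∇_Y ξ). -/
/-- Abstract algebraic model of a nearly cosymplectic (almost contact metric)
manifold: `A` plays the role of the algebra of smooth functions, `V` of the
module of vector fields, `D` of the directional derivative, `g` of the metric,
`nabla` of the Levi-Civita connection, `θ` of the structure tensor and `ξ` of
the characteristic (Reeb) unit vector field, with `η X = g X ξ`. -/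
structure NearlyCosymplectic where
  A : Type
  V : Type
  [ringA : CommRing A]
  [algA : Algebra ℝ A]
  [grpV : AddCommGroup V]
  [modV : Module A V]
  /-- directional derivative of functions along a vector field -/
  D : V → A → A
  D_addl : ∀ X Y f, D (X + Y) f = D X f + D Y f
  D_smull : ∀ (f : A) (X : V) (h : A), D (f • X) h = f * D X h
  D_addr : ∀ (X : V) (f h : A), D X (f + h) = D X f + D X h
  D_mul : ∀ (X : V) (f h : A), D X (f * h) = D X f * h + f * D X h
  /-- Lie bracket of vector fields -/
  bracket : V → V → V
  bracket_D : ∀ X Y f, D (bracket X Y) f = D X (D Y f) - D Y (D X f)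
  /-- the Riemannian metric -/
  g : V → V → A
  g_symm : ∀ X Y, g X Y = g Y X
  g_addl : ∀ X Y Z, g (X + Y) Z = g X Z + g Y Z
  g_smull : ∀ (f : A) X Y, g (f • X) Y = f * g X Y
  /-- the Levi-Civita connection -/
  nabla : V → V → V
  nabla_addl : ∀ X Y Z, nabla (X + Y) Z = nabla X Z + nabla Y Z
  nabla_smull : ∀ (f : A) X Y, nabla (f • X) Y = f • nabla X Y
  nabla_addr : ∀ X Y Z, nabla X (Y + Z) = nabla X Y + nabla X Z
  nabla_leibniz : ∀ (X : V) (f : A) (Y : V),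
    nabla X (f • Y) = D X f • Y + f • nabla X Y
  metric_compat : ∀ X Y Z, D X (g Y Z) = g (nabla X Y) Z + g Y (nabla X Z)
  torsion_free : ∀ X Y, nabla X Y - nabla Y X = bracket X Y
  /-- the structure (1,1)-tensor θ -/
  θ : V → V
  θ_add : ∀ X Y, θ (X + Y) = θ X + θ Y
  θ_smul : ∀ (f : A) X, θ (f • X) = f • θ X
  /-- the characteristic vector field ξ -/
  ξ : V
  /-- ξ is a unit vector field (and η(ξ)=1, with η X = g X ξ) -/
  ξ_unit : g ξ ξ = 1
  /-- θ² = -Id + η ⊗ ξ -/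
  θ_sq : ∀ X, θ (θ X) = -X + g X ξ • ξ
  /-- metric compatibility of the almost contact structure -/
  θ_compat : ∀ X Y, g (θ X) (θ Y) = g X Y - g X ξ * g Y ξ
  /-- the nearly cosymplectic condition (∇_X θ)(Y) + (∇_Y θ)(X) = 0 -/
  nearly : ∀ X Y,
    (nabla X (θ Y) - θ (nabla X Y)) + (nabla Y (θ X) - θ (nabla Y X)) = 0

attribute [instance] NearlyCosymplectic.ringA NearlyCosymplectic.algA
  NearlyCosymplectic.grpV NearlyCosymplectic.modV

namespace NearlyCosymplectic

variable (M : NearlyCosymplectic)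

/-- the covariant derivative (∇_X θ)(Y) -/
def nablaθ (X Y : M.V) : M.V := M.nabla X (M.θ Y) - M.θ (M.nabla X Y)

/-- the Riemann curvature operator R(X,Y)Z = [∇_X,∇_Y]Z - ∇_{[X,Y]}Z -/
def R (X Y Z : M.V) : M.V :=
  M.nabla X (M.nabla Y Z) - M.nabla Y (M.nabla X Z) - M.nabla (M.bracket X Y) Z

/-- the second covariant derivative (∇²_{X,Y} θ)(Z) -/
def nabla2θ (X Y Z : M.V) : M.V :=
  M.nabla X (M.nablaθ Y Z) - M.nablaθ (M.nabla X Y) Z - M.nablaθ Y (M.nabla X Z)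

end NearlyCosymplectic

open NearlyCosymplectic

namespace NCAux

variable (M : NearlyCosymplectic)

/-- the function c = g(θξ, ξ) -/
def c : M.A := M.g (M.θ M.ξ) M.ξ

section Basic

lemma halfA (x : M.A) (h : x + x = 0) : x = 0 := by
  have h2 : (2 : M.A) * x = 0 := by rw [two_mul]; exact h
  have : (algebraMap ℝ M.A (2⁻¹ : ℝ)) * ((2 : M.A) * x) = x := by
    rw [← mul_assoc, show (2 : M.A) = algebraMap ℝ M.A 2 from (map_ofNat _ 2).symm,
      ← map_mul]
    norm_num
  rw [h2, mul_zero] at this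
  exact this.symm

lemma halfV (v : M.V) (h : v + v = 0) : v = 0 := by
  have h2 : (2 : M.A) • v = 0 := by rw [two_smul]; exact h
  have : (algebraMap ℝ M.A (2⁻¹ : ℝ)) • ((2 : M.A) • v) = v := by
    rw [← mul_smul, show (2 : M.A) = algebraMap ℝ M.A 2 from (map_ofNat _ 2).symm,
      ← map_mul]
    norm_num
  rw [h2, smul_zero] at this
  exact this.symm

lemma D_zero (X : M.V) : M.D X 0 = 0 := by
  have := M.D_addr X 0 0
  rw [add_zero] at this
  have := right_eq_add.mp this
  exact this

lemma D_one (X : M.V) : M.D X 1 = 0 := by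
  have := M.D_mul X 1 1
  rw [mul_one, mul_one, one_mul] at this
  exact right_eq_add.mp this

lemma g_addr (X Y Z : M.V) : M.g X (Y + Z) = M.g X Y + M.g X Z := by
  rw [M.g_symm, M.g_addl, M.g_symm Y X, M.g_symm Z X]

lemma g_smulr (f : M.A) (X Y : M.V) : M.g X (f • Y) = f * M.g X Y := by
  rw [M.g_symm, M.g_smull, M.g_symm Y X]

lemma g_zeror (X : M.V) : M.g X 0 = 0 := by
  have : M.g X ((0 : M.A) • M.ξ) = 0 := by rw [g_smulr, zero_mul]
  rwa [zero_smul] at this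

lemma g_zerol (X : M.V) : M.g 0 X = 0 := by rw [M.g_symm]; exact g_zeror M X

lemma g_negr (X Y : M.V) : M.g X (-Y) = -M.g X Y := by
  have : M.g X ((-1 : M.A) • Y) = -M.g X Y := by rw [g_smulr]; ring
  rwa [neg_one_smul] at this

lemma g_negl (X Y : M.V) : M.g (-X) Y = -M.g X Y := by
  rw [M.g_symm, g_negr, M.g_symm]

lemma g_subr (X Y Z : M.V) : M.g X (Y - Z) = M.g X Y - M.g X Z := by
  rw [sub_eq_add_neg, g_addr, g_negr, sub_eq_add_neg]

lemma g_subl (X Y Z : M.V) : M.g (X - Y) Z = M.g X Z - M.g Y Z := by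
  rw [sub_eq_add_neg, M.g_addl, g_negl, sub_eq_add_neg]

lemma θ_zero : M.θ 0 = 0 := by
  have : M.θ ((0 : M.A) • M.ξ) = (0 : M.A) • M.θ M.ξ := M.θ_smul 0 M.ξ
  rwa [zero_smul, zero_smul] at this

lemma θ_neg (X : M.V) : M.θ (-X) = -M.θ X := by
  have : M.θ ((-1 : M.A) • X) = (-1 : M.A) • M.θ X := M.θ_smul (-1) X
  rwa [neg_one_smul, neg_one_smul] at this

lemma θ_sub (X Y : M.V) : M.θ (X - Y) = M.θ X - M.θ Y := by
  rw [sub_eq_add_neg, M.θ_add, θ_neg, sub_eq_add_neg]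

lemma nabla_negl (X Y : M.V) : M.nabla (-X) Y = -M.nabla X Y := by
  have : M.nabla ((-1 : M.A) • X) Y = (-1 : M.A) • M.nabla X Y := M.nabla_smull _ _ _
  rwa [neg_one_smul, neg_one_smul] at this

lemma nabla_negr (X Y : M.V) : M.nabla X (-Y) = -M.nabla X Y := by
  have : M.nabla X ((-1 : M.A) • Y) = M.D X (-1 : M.A) • Y + (-1 : M.A) • M.nabla X Y :=
    M.nabla_leibniz X (-1) Y
  have hd : M.D X (-1 : M.A) = 0 := by
    have h0 : M.D X ((-1 : M.A) + 1) = M.D X (-1) + M.D X 1 := M.D_addr X (-1) 1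
    rw [neg_add_cancel, D_zero, D_one] at h0
    linear_combination -h0
  rw [hd, zero_smul, zero_add, neg_one_smul, neg_one_smul] at this
  exact this

end Basic

section Core

lemma eta_h (X : M.V) : M.g (M.nabla X M.ξ) M.ξ = 0 := by
  have h := M.metric_compat X M.ξ M.ξ
  rw [M.ξ_unit, D_one, M.g_symm M.ξ (M.nabla X M.ξ)] at h
  exact halfA M _ h.symm

lemma theta_theta_xi : M.θ (M.θ M.ξ) = 0 := by
  rw [M.θ_sq, M.ξ_unit, one_smul, neg_add_cancel]

lemma theta_xi : M.θ M.ξ = c M • M.ξ := by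
  have h := M.θ_sq (M.θ M.ξ)
  rw [theta_theta_xi, θ_zero] at h
  have h2 : -M.θ M.ξ + c M • M.ξ = 0 := h.symm
  exact neg_add_eq_zero.mp h2

lemma c_sq : c M * c M = 0 := by
  have h := M.θ_compat M.ξ M.ξ
  rw [M.ξ_unit, theta_xi, M.g_smull, g_smulr, M.ξ_unit] at h
  linear_combination h

lemma phi0 (W : M.V) : M.g (M.θ (M.θ W)) M.ξ = 0 := by
  rw [M.θ_sq, M.g_addl, g_negl, M.g_smull, M.ξ_unit]
  ring

lemma phi (Z : M.V) : M.g (M.θ Z) M.ξ = c M * M.g Z M.ξ := by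
  have hz : Z = M.g Z M.ξ • M.ξ - M.θ (M.θ Z) := by
    rw [M.θ_sq]; abel
  have : M.θ Z = M.g Z M.ξ • M.θ M.ξ - M.θ (M.θ (M.θ Z)) := by
    conv_lhs => rw [hz]
    rw [θ_sub, M.θ_smul]
  rw [this, g_subl, M.g_smull, theta_xi, M.g_smull, M.ξ_unit, phi0]
  ring

lemma skew (X Y : M.V) :
    M.g (M.θ X) Y = -M.g X (M.θ Y) + 2 * c M * M.g X M.ξ * M.g Y M.ξ := by
  have h := M.θ_compat X (M.θ Y)
  rw [M.θ_sq Y, g_addr, g_negr, g_smulr] at h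
  linear_combination -h + M.g X M.ξ * phi M Y + M.g Y M.ξ * phi M X

lemma N_anti (X Y : M.V) : M.nablaθ X Y = -M.nablaθ Y X := by
  have h := M.nearly X Y
  exact eq_neg_of_add_eq_zero_left h

lemma N_diag (X : M.V) : M.nablaθ X X = 0 := by
  have h := M.nearly X X
  exact halfV M _ h

lemma N_smulr (X : M.V) (f : M.A) (Y : M.V) : M.nablaθ X (f • Y) = f • M.nablaθ X Y := by
  simp only [NearlyCosymplectic.nablaθ, M.θ_smul, M.nabla_leibniz, M.θ_add]
  module

lemma N_smull (f : M.A) (X Y : M.V) : M.nablaθ (f • X) Y = f • M.nablaθ X Y := by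
  simp only [NearlyCosymplectic.nablaθ, M.nabla_smull, M.θ_smul]
  module

lemma lemA (X Y : M.V) : M.nablaθ X (M.θ Y) =
    -M.θ (M.nablaθ X Y) + M.g Y (M.nabla X M.ξ) • M.ξ + M.g Y M.ξ • M.nabla X M.ξ := by
  have hD : M.D X (M.g Y M.ξ) = M.g (M.nabla X Y) M.ξ + M.g Y (M.nabla X M.ξ) :=
    M.metric_compat X Y M.ξ
  simp only [NearlyCosymplectic.nablaθ]
  rw [M.θ_sq Y, M.nabla_addr, nabla_negr, M.nabla_leibniz, hD,
    θ_sub, M.θ_sq (M.nabla X Y)]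
  module

lemma lemB (X Y : M.V) : M.nablaθ (M.θ X) Y =
    -M.θ (M.nablaθ X Y) - M.g X (M.nabla Y M.ξ) • M.ξ - M.g X M.ξ • M.nabla Y M.ξ := by
  rw [N_anti M (M.θ X) Y, lemA M Y X, N_anti M Y X, θ_neg]
  module

lemma lemNxi (X : M.V) : M.nablaθ X M.ξ =
    M.D X (c M) • M.ξ + c M • M.nabla X M.ξ - M.θ (M.nabla X M.ξ) := by
  simp only [NearlyCosymplectic.nablaθ]
  rw [theta_xi, M.nabla_leibniz]

lemma cDc (X : M.V) : c M * M.D X (c M) = 0 := by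
  have hA := lemA M X M.ξ
  rw [M.g_symm M.ξ (M.nabla X M.ξ), eta_h, zero_smul, add_zero, M.ξ_unit, one_smul,
    theta_xi, N_smulr, lemNxi, θ_sub, M.θ_add, M.θ_smul, M.θ_smul,
    M.θ_sq (M.nabla X M.ξ), theta_xi] at hA
  have h2 := congrArg (fun v => M.g v M.ξ) hA
  simp only [g_subl, M.g_addl, M.g_smull, g_negl, M.ξ_unit, eta_h, phi] at h2
  have h3 : c M * M.D X (c M) + c M * M.D X (c M) = 0 := by
    linear_combination h2
  exact halfA M _ h3

lemma h_xi : M.nabla M.ξ M.ξ = 0 := by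
  have hB := lemB M M.ξ M.ξ
  rw [theta_xi, N_smull, N_diag, smul_zero, θ_zero, neg_zero,
    M.g_symm M.ξ (M.nabla M.ξ M.ξ), eta_h, zero_smul, M.ξ_unit, one_smul] at hB
  simpa using hB.symm

lemma star (X : M.V) : M.nabla (M.θ X) M.ξ = -M.θ (M.nabla X M.ξ) := by
  have hB := lemB M X M.ξ
  rw [h_xi, g_zeror, zero_smul, smul_zero, sub_zero, sub_zero,
    lemNxi M (M.θ X), lemNxi M X, θ_sub, M.θ_add, M.θ_smul, M.θ_smul,
    M.θ_sq (M.nabla X M.ξ), theta_xi, eta_h, zero_smul, add_zero, smul_smul,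
    show M.D X (c M) * c M = 0 from by linear_combination cDc M X, zero_smul] at hB
  have E : M.θ (M.nabla (M.θ X) M.ξ) =
      M.D (M.θ X) (c M) • M.ξ + c M • M.nabla (M.θ X) M.ξ
        + c M • M.θ (M.nabla X M.ξ) + M.nabla X M.ξ := by
    linear_combination (norm := module) -hB
  have E2 := congrArg M.θ E
  simp only [M.θ_add, M.θ_smul] at E2
  rw [M.θ_sq (M.nabla (M.θ X) M.ξ), M.θ_sq (M.nabla X M.ξ), theta_xi, E,
    eta_h M (M.θ X), zero_smul, add_zero, eta_h M X, zero_smul, add_zero] at E2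
  have h1 : M.D (M.θ X) (c M) * c M = 0 := by linear_combination cDc M (M.θ X)
  have h2 : c M * M.D (M.θ X) (c M) = 0 := cDc M (M.θ X)
  have h3 := c_sq M
  simp only [smul_add, smul_smul, smul_neg, h1, h2, h3, zero_smul, add_zero, zero_add] at E2
  linear_combination (norm := module) -E2

lemma theta_h (X : M.V) : M.θ (M.nabla X M.ξ) = -M.nabla (M.θ X) M.ξ := by
  rw [star, neg_neg]

lemma theta_h_theta (Y : M.V) : M.θ (M.nabla (M.θ Y) M.ξ) = M.nabla Y M.ξ := by
  rw [star, θ_neg, M.θ_sq, eta_h, zero_smul, add_zero, neg_neg]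

lemma hθξ_zero : M.nabla (M.θ M.ξ) M.ξ = 0 := by
  rw [theta_xi, M.nabla_smull, h_xi, smul_zero]

lemma etaN (X Y : M.V) : M.g (M.nablaθ X Y) M.ξ =
    M.D X (c M) * M.g Y M.ξ + c M * M.g Y (M.nabla X M.ξ)
      - M.g Y (M.nabla (M.θ X) M.ξ) := by
  have h1 := M.metric_compat X (M.θ Y) M.ξ
  rw [phi M Y, M.D_mul] at h1
  have h2 := M.metric_compat X Y M.ξ
  have h3 : M.g (M.θ Y) (M.nabla X M.ξ) = M.g Y (M.nabla (M.θ X) M.ξ) := by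
    have hs := skew M Y (M.nabla X M.ξ)
    rw [eta_h, theta_h, g_negr] at hs
    linear_combination hs
  simp only [NearlyCosymplectic.nablaθ, g_subl]
  rw [phi M (M.nabla X Y)]
  linear_combination -h1 + c M * h2 - h3

lemma Dc (X : M.V) : M.D X (c M) = 0 := by
  have key : ∀ Z : M.V, M.D Z (c M) = -(M.D M.ξ (c M) * M.g Z M.ξ) := by
    intro Z
    have ha := etaN M Z M.ξ
    rw [M.ξ_unit, mul_one, M.g_symm M.ξ (M.nabla Z M.ξ), eta_h,
      M.g_symm M.ξ (M.nabla (M.θ Z) M.ξ), eta_h, mul_zero, add_zero, sub_zero] at ha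
    have hb := etaN M M.ξ Z
    rw [h_xi, g_zeror, hθξ_zero, g_zeror, mul_zero, add_zero, sub_zero] at hb
    have hanti := congrArg (fun v => M.g v M.ξ) (N_anti M Z M.ξ)
    simp only [g_negl] at hanti
    rw [ha, hb] at hanti
    exact hanti
  have h0 : M.D M.ξ (c M) = 0 := by
    have hk := key M.ξ
    rw [M.ξ_unit, mul_one] at hk
    exact halfA M _ (by linear_combination hk)
  rw [key X, h0, zero_mul, neg_zero]

lemma lemD'' (X Y : M.V) :
    c M * (M.g Y (M.nabla X M.ξ) + M.g X (M.nabla Y M.ξ)) =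
      M.g Y (M.nabla (M.θ X) M.ξ) + M.g X (M.nabla (M.θ Y) M.ξ) := by
  have hanti := congrArg (fun v => M.g v M.ξ) (N_anti M X Y)
  simp only [g_negl] at hanti
  rw [etaN, etaN, Dc, Dc] at hanti
  linear_combination hanti

lemma sigma (X Y : M.V) : M.g Y (M.nabla X M.ξ) + M.g X (M.nabla Y M.ξ) = 0 := by
  have h1 := lemD'' M X Y
  have h2 := lemD'' M (M.θ X) Y
  have hθθ : M.nabla (M.θ (M.θ X)) M.ξ = -M.nabla X M.ξ := by
    rw [M.θ_sq, M.nabla_addl, nabla_negl, M.nabla_smull, h_xi, smul_zero, add_zero]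
  have ha : M.g (M.θ X) (M.nabla (M.θ Y) M.ξ) = -M.g X (M.nabla Y M.ξ) := by
    have hs := skew M X (M.nabla (M.θ Y) M.ξ)
    rw [theta_h_theta, eta_h] at hs
    linear_combination hs
  have hb : M.g (M.θ X) (M.nabla Y M.ξ) = M.g X (M.nabla (M.θ Y) M.ξ) := by
    have hs := skew M X (M.nabla Y M.ξ)
    rw [theta_h, g_negr, eta_h] at hs
    linear_combination hs
  rw [hθθ, g_negr, ha, hb] at h2
  linear_combination c M * h1 + h2
    - (M.g Y (M.nabla X M.ξ) + M.g X (M.nabla Y M.ξ)) * c_sq M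

lemma keyscalar (X Y : M.V) :
    M.g (M.nablaθ X Y) M.ξ + c M * M.g X (M.nabla Y M.ξ)
      + M.g Y (M.nabla (M.θ X) M.ξ) = 0 := by
  rw [etaN, Dc]
  linear_combination c M * sigma M X Y

end Core

end NCAux

/-- (∇_{θX} θ)(θY) = -(∇_X θ)(Y) + g(Y,ξ) ∇_{θX} ξ + g(X,ξ) θ(∇_Y ξ). -/
theorem stmt1 (M : NearlyCosymplectic) (X Y : M.V) :
    M.nablaθ (M.θ X) (M.θ Y) =
      -(M.nablaθ X Y) + M.g Y M.ξ • M.nabla (M.θ X) M.ξ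
        + M.g X M.ξ • M.θ (M.nabla Y M.ξ) := by
  have hA := NCAux.lemA M (M.θ X) Y
  rw [NCAux.lemB M X Y, NCAux.θ_sub, NCAux.θ_sub, NCAux.θ_neg,
    M.θ_sq (M.nablaθ X Y), M.θ_smul, M.θ_smul, NCAux.theta_xi] at hA
  linear_combination (norm := module) hA + (NCAux.keyscalar M X Y) • M.ξ
end

section
/- On a nearly cosymplectic manifold, θ(∇_X ξ) = -∇_{θX} ξ for every tangent vector X. -/
namespace NearlyCosymplectic

variable (M : NearlyCosymplectic)

/-! ### Auxiliary lemmas for stmt2 -/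

lemma halfA' (a : M.A) (h : a + a = 0) : a = 0 := by
  have h2 : (2 : ℝ) • a = 0 := by rw [two_smul]; exact h
  have h3 : a = (2 : ℝ)⁻¹ • ((2:ℝ) • a) := by rw [smul_smul]; norm_num
  rw [h3, h2, smul_zero]

lemma halfV' (v : M.V) (h : v + v = 0) : v = 0 := by
  have h2 : (2 : M.A) • v = 0 := by rw [two_smul]; exact h
  have inv : ((algebraMap ℝ M.A) (1/2)) * 2 = 1 := by
    have h3 : ((2:M.A)) = algebraMap ℝ M.A 2 := (map_ofNat (algebraMap ℝ M.A) 2).symm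
    rw [h3, ← map_mul]; norm_num
  calc v = (1 : M.A) • v := (one_smul _ _).symm
    _ = (((algebraMap ℝ M.A) (1/2)) * 2) • v := by rw [inv]
    _ = ((algebraMap ℝ M.A) (1/2)) • ((2:M.A) • v) := by rw [mul_smul]
    _ = 0 := by rw [h2, smul_zero]

lemma g_neg_l (X Y : M.V) : M.g (-X) Y = -(M.g X Y) := by
  rw [← neg_one_smul M.A X, M.g_smull, neg_one_mul]

lemma g_sub_l (X Y Z : M.V) : M.g (X - Y) Z = M.g X Z - M.g Y Z := by
  rw [sub_eq_add_neg, M.g_addl, M.g_neg_l, sub_eq_add_neg]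

lemma g_add_r (X Y Z : M.V) : M.g X (Y + Z) = M.g X Y + M.g X Z := by
  rw [M.g_symm, M.g_addl, M.g_symm Y X, M.g_symm Z X]

lemma g_smul_r (f : M.A) (X Y : M.V) : M.g X (f • Y) = f * M.g X Y := by
  rw [M.g_symm, M.g_smull, M.g_symm Y X]

lemma g_zero_l (Y : M.V) : M.g 0 Y = 0 := by
  simpa using M.g_smull 0 0 Y

lemma g_zero_r (X : M.V) : M.g X 0 = 0 := by
  rw [M.g_symm, M.g_zero_l]

lemma theta_zero : M.θ 0 = 0 := by
  simpa using M.θ_smul 0 0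

lemma theta_neg (X : M.V) : M.θ (-X) = -(M.θ X) := by
  rw [← neg_one_smul M.A X, M.θ_smul, neg_one_smul]

lemma theta_sub (X Y : M.V) : M.θ (X - Y) = M.θ X - M.θ Y := by
  rw [sub_eq_add_neg, M.θ_add, M.theta_neg, sub_eq_add_neg]

lemma nabla_zero_l (Y : M.V) : M.nabla 0 Y = 0 := by
  simpa using M.nabla_smull 0 0 Y

lemma nabla_zero_r (X : M.V) : M.nabla X 0 = 0 := by
  have h : M.nabla X ((0:M.A) • (0:M.V)) = M.D X 0 • (0:M.V) + (0:M.A) • M.nabla X (0:M.V) :=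
    M.nabla_leibniz X 0 0
  rw [zero_smul] at h
  rw [h, smul_zero, zero_smul, add_zero]

lemma D_one (X : M.V) : M.D X 1 = 0 := by
  have h := M.D_mul X 1 1
  simp only [one_mul, mul_one] at h
  exact (left_eq_add.mp h)

lemma D_neg_one (X : M.V) : M.D X (-1) = 0 := by
  have h := M.D_mul X (-1) (-1)
  rw [neg_one_mul, neg_neg, M.D_one] at h
  have h2 : M.D X (-1) + M.D X (-1) = 0 := by linear_combination h
  exact M.halfA' _ h2

lemma nabla_neg_r (X Y : M.V) : M.nabla X (-Y) = -(M.nabla X Y) := by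
  rw [← neg_one_smul M.A Y, M.nabla_leibniz, M.D_neg_one, zero_smul, zero_add, neg_one_smul]

lemma nabla_neg_l (X Y : M.V) : M.nabla (-X) Y = -(M.nabla X Y) := by
  rw [← neg_one_smul M.A X, M.nabla_smull, neg_one_smul]

lemma D_neg_l (X : M.V) (f : M.A) : M.D (-X) f = -(M.D X f) := by
  rw [← neg_one_smul M.A X, M.D_smull, neg_one_mul]

/-- ∇_X ξ is orthogonal to ξ. -/
lemma hperp (X : M.V) : M.g (M.nabla X M.ξ) M.ξ = 0 := by
  have h := M.metric_compat X M.ξ M.ξ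
  rw [M.ξ_unit, M.D_one, M.g_symm M.ξ (M.nabla X M.ξ)] at h
  exact M.halfA' _ (h.symm)

/-- θ(θξ) = 0. -/
lemma theta_u : M.θ (M.θ M.ξ) = 0 := by
  rw [M.θ_sq, M.ξ_unit, one_smul, neg_add_cancel]

/-- g(X, θξ) = g(X, ξ) · c  where c = g(ξ, θξ). -/
lemma g_u (X : M.V) : M.g X (M.θ M.ξ) = M.g X M.ξ * M.g M.ξ (M.θ M.ξ) := by
  have h := M.θ_compat (M.θ X) M.ξ
  rw [M.ξ_unit, mul_one, sub_self, M.θ_sq X] at h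
  rw [M.g_addl, M.g_neg_l, M.g_smull] at h
  linear_combination -h

/-- c² = 0. -/
lemma c_sq : M.g M.ξ (M.θ M.ξ) * M.g M.ξ (M.θ M.ξ) = 0 := by
  have h := M.θ_compat M.ξ M.ξ
  rw [M.ξ_unit, mul_one, sub_self] at h
  have h2 := M.g_u (M.θ M.ξ)
  rw [h, M.g_symm (M.θ M.ξ) M.ξ] at h2
  exact h2.symm

/-- Key consequence of θ² = -Id + η⊗ξ :
    (∇_X θ)(θY) + θ((∇_X θ)Y) = g(Y,∇_X ξ)•ξ + η(Y)•∇_X ξ. -/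
lemma keyI (X Y : M.V) :
    M.nablaθ X (M.θ Y) + M.θ (M.nablaθ X Y)
      = M.g Y (M.nabla X M.ξ) • M.ξ + M.g Y M.ξ • M.nabla X M.ξ := by
  unfold nablaθ
  rw [M.theta_sub]
  rw [M.θ_sq Y, M.θ_sq (M.nabla X Y)]
  rw [M.nabla_addr, M.nabla_neg_r, M.nabla_leibniz]
  rw [M.metric_compat X Y M.ξ]
  module

lemma nablaθ_zero_r (X : M.V) : M.nablaθ X 0 = 0 := by
  unfold nablaθ
  rw [M.theta_zero, M.nabla_zero_r, M.theta_zero, sub_zero]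

/-- ∇_X (θξ) = (Xc)•ξ + c•∇_X ξ, where c = g(ξ, θξ). -/
lemma nabla_u (X : M.V) :
    M.nabla X (M.θ M.ξ) =
      M.D X (M.g M.ξ (M.θ M.ξ)) • M.ξ + M.g M.ξ (M.θ M.ξ) • M.nabla X M.ξ := by
  have k := M.keyI X (M.θ M.ξ)
  rw [M.theta_u, M.nablaθ_zero_r, zero_add] at k
  have e2 : M.nablaθ X (M.θ M.ξ) = -(M.θ (M.nabla X (M.θ M.ξ))) := by
    unfold nablaθ
    rw [M.theta_u, M.nabla_zero_r, zero_sub]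
  rw [e2, M.theta_neg, M.θ_sq (M.nabla X (M.θ M.ξ))] at k
  have s1 : M.g (M.θ M.ξ) (M.nabla X M.ξ) = 0 := by
    rw [M.g_symm, M.g_u, M.hperp, zero_mul]
  have s2 : M.g (M.θ M.ξ) M.ξ = M.g M.ξ (M.θ M.ξ) := M.g_symm _ _
  have s3 : M.g (M.nabla X (M.θ M.ξ)) M.ξ = M.D X (M.g M.ξ (M.θ M.ξ)) := by
    have m := M.metric_compat X (M.θ M.ξ) M.ξ
    rw [M.g_symm (M.θ M.ξ) M.ξ] at m
    rw [M.g_symm (M.θ M.ξ) (M.nabla X M.ξ)] at m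
    rw [M.g_u (M.nabla X M.ξ), M.hperp, zero_mul, add_zero] at m
    exact m.symm
  rw [s1, s2, s3, zero_smul, zero_add] at k
  linear_combination (norm := module) k

/-- (∇_X θ)(ξ) in closed form. -/
lemma nablaθ_xi (X : M.V) :
    M.nablaθ X M.ξ =
      M.D X (M.g M.ξ (M.θ M.ξ)) • M.ξ + M.g M.ξ (M.θ M.ξ) • M.nabla X M.ξ
        - M.θ (M.nabla X M.ξ) := by
  unfold nablaθ
  rw [M.nabla_u X]

/-- antisymmetry of ∇θ. -/
lemma nablaθ_antisymm (X Y : M.V) : M.nablaθ X Y = -(M.nablaθ Y X) := by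
  have h := M.nearly X Y
  exact eq_neg_of_add_eq_zero_left h

/-- ξc = 0. -/
lemma D_xi_c : M.D M.ξ (M.g M.ξ (M.θ M.ξ)) = 0 := by
  have p0 : M.nablaθ M.ξ M.ξ = 0 := M.halfV' _ (M.nearly M.ξ M.ξ)
  have hJ : M.θ (M.nabla M.ξ M.ξ)
      = M.D M.ξ (M.g M.ξ (M.θ M.ξ)) • M.ξ + M.g M.ξ (M.θ M.ξ) • M.nabla M.ξ M.ξ := by
    have h := M.nablaθ_xi M.ξ
    rw [p0] at h
    linear_combination (norm := module) h
  have hK : M.nabla M.ξ M.ξ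
      = -(M.D M.ξ (M.g M.ξ (M.θ M.ξ)) • M.θ M.ξ)
        - (M.g M.ξ (M.θ M.ξ) * M.D M.ξ (M.g M.ξ (M.θ M.ξ))) • M.ξ := by
    have h := congrArg M.θ hJ
    rw [M.θ_sq (M.nabla M.ξ M.ξ), M.hperp, zero_smul, add_zero, M.θ_add, M.θ_smul,
      M.θ_smul, hJ, smul_add, smul_smul (M.g M.ξ (M.θ M.ξ)) (M.g M.ξ (M.θ M.ξ)),
      M.c_sq, zero_smul, add_zero, smul_smul] at h
    linear_combination (norm := module) -h
  have hac : M.D M.ξ (M.g M.ξ (M.θ M.ξ)) * M.g M.ξ (M.θ M.ξ) = 0 := by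
    have h := M.hperp M.ξ
    rw [hK, M.g_sub_l, M.g_neg_l, M.g_smull, M.g_smull, M.ξ_unit, mul_one,
      M.g_symm (M.θ M.ξ) M.ξ] at h
    have h2 : M.D M.ξ (M.g M.ξ (M.θ M.ξ)) * M.g M.ξ (M.θ M.ξ)
        + M.D M.ξ (M.g M.ξ (M.θ M.ξ)) * M.g M.ξ (M.θ M.ξ) = 0 := by
      linear_combination -h
    exact M.halfA' _ h2
  have hK' : M.nabla M.ξ M.ξ = -(M.D M.ξ (M.g M.ξ (M.θ M.ξ)) • M.θ M.ξ) := by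
    rw [hK, mul_comm (M.g M.ξ (M.θ M.ξ)) (M.D M.ξ (M.g M.ξ (M.θ M.ξ))), hac, zero_smul,
      sub_zero]
  have hth : M.θ (M.nabla M.ξ M.ξ) = 0 := by
    rw [hK', M.theta_neg, M.θ_smul, M.theta_u, smul_zero, neg_zero]
  rw [hth, hK'] at hJ
  have hJ2 : M.D M.ξ (M.g M.ξ (M.θ M.ξ)) • M.ξ = 0 := by
    rw [smul_neg, smul_smul, mul_comm (M.g M.ξ (M.θ M.ξ)) (M.D M.ξ (M.g M.ξ (M.θ M.ξ))),
      hac, zero_smul, neg_zero, add_zero] at hJ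
    exact hJ.symm
  have h3 := congrArg (fun v => M.g v M.ξ) hJ2
  simp only [M.g_smull, M.ξ_unit, mul_one, M.g_zero_l] at h3
  exact h3

/-- ∇_ξ ξ = 0. -/
lemma h_xi : M.nabla M.ξ M.ξ = 0 := by
  have p0 : M.nablaθ M.ξ M.ξ = 0 := M.halfV' _ (M.nearly M.ξ M.ξ)
  have hJ : M.θ (M.nabla M.ξ M.ξ) = M.g M.ξ (M.θ M.ξ) • M.nabla M.ξ M.ξ := by
    have h := M.nablaθ_xi M.ξ
    rw [p0, M.D_xi_c, zero_smul, zero_add] at h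
    linear_combination (norm := module) h
  have h2 := congrArg M.θ hJ
  rw [M.θ_sq (M.nabla M.ξ M.ξ), M.hperp, zero_smul, add_zero, M.θ_smul, hJ,
    smul_smul, M.c_sq, zero_smul] at h2
  linear_combination (norm := module) -h2

/-- master equation from the nearly-cosymplectic condition. -/
lemma eqM (Y : M.V) :
    M.D (M.θ Y) (M.g M.ξ (M.θ M.ξ)) • M.ξ
      + M.g M.ξ (M.θ M.ξ) • M.nabla (M.θ Y) M.ξ
      - M.θ (M.nabla (M.θ Y) M.ξ)
      + (M.D Y (M.g M.ξ (M.θ M.ξ)) • M.θ M.ξ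
        + M.g M.ξ (M.θ M.ξ) • M.θ (M.nabla Y M.ξ)
        + M.nabla Y M.ξ) = 0 := by
  have k := M.keyI M.ξ Y
  rw [M.h_xi, M.g_zero_r, zero_smul, smul_zero, add_zero] at k
  rw [M.nablaθ_antisymm M.ξ (M.θ Y), M.nablaθ_antisymm M.ξ Y, M.theta_neg] at k
  have e1 := M.nablaθ_xi (M.θ Y)
  have e2 := M.nablaθ_xi Y
  have e3 : M.θ (M.nablaθ Y M.ξ) =
      M.D Y (M.g M.ξ (M.θ M.ξ)) • M.θ M.ξ
        + M.g M.ξ (M.θ M.ξ) • M.θ (M.nabla Y M.ξ) + M.nabla Y M.ξ := by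
    rw [e2, M.theta_sub, M.θ_add, M.θ_smul, M.θ_smul, M.θ_sq (M.nabla Y M.ξ),
      M.hperp, zero_smul, add_zero]
    module
  rw [e1, e3] at k
  linear_combination (norm := module) -k

/-- Yc = 0 for all Y. -/
lemma Dc_zero (Y : M.V) : M.D Y (M.g M.ξ (M.θ M.ξ)) = 0 := by
  have hM := M.eqM Y
  have hM' := congrArg M.θ hM
  simp only [M.θ_add, M.theta_sub, M.θ_smul, M.theta_zero, M.theta_u, smul_zero] at hM'
  rw [M.θ_sq (M.nabla (M.θ Y) M.ξ), M.θ_sq (M.nabla Y M.ξ), M.hperp, M.hperp] at hM'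
  have hM2 := M.eqM (M.θ Y)
  rw [M.θ_sq Y] at hM2
  rw [show M.D (-Y + M.g Y M.ξ • M.ξ) (M.g M.ξ (M.θ M.ξ))
        = -(M.D Y (M.g M.ξ (M.θ M.ξ))) from by
      rw [M.D_addl, M.D_neg_l, M.D_smull, M.D_xi_c, mul_zero, add_zero]] at hM2
  rw [show M.nabla (-Y + M.g Y M.ξ • M.ξ) M.ξ = -(M.nabla Y M.ξ) from by
      rw [M.nabla_addl, M.nabla_neg_l, M.nabla_smull, M.h_xi, smul_zero, add_zero]] at hM2
  rw [M.theta_neg] at hM2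
  have key : M.D Y (M.g M.ξ (M.θ M.ξ)) • M.ξ = 0 := by
    linear_combination (norm := module) hM' - hM2
  have h3 := congrArg (fun v => M.g v M.ξ) key
  simp only [M.g_smull, M.ξ_unit, mul_one, M.g_zero_l] at h3
  exact h3

end NearlyCosymplectic

open NearlyCosymplectic

/-- θ(∇_X ξ) = -∇_{θX} ξ. -/
theorem stmt2 (M : NearlyCosymplectic) (X : M.V) :
    M.θ (M.nabla X M.ξ) = -(M.nabla (M.θ X) M.ξ) := by
  have hM := M.eqM X
  rw [M.Dc_zero X, M.Dc_zero (M.θ X), zero_smul, zero_smul, zero_add, zero_add] at hM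
  have hM' := congrArg M.θ hM
  simp only [M.θ_add, M.theta_sub, M.θ_smul, M.theta_zero] at hM'
  rw [M.θ_sq (M.nabla (M.θ X) M.ξ), M.θ_sq (M.nabla X M.ξ), M.hperp, M.hperp] at hM'
  have e : M.θ (M.nabla (M.θ X) M.ξ)
      = M.g M.ξ (M.θ M.ξ) • M.nabla (M.θ X) M.ξ
        + M.g M.ξ (M.θ M.ξ) • M.θ (M.nabla X M.ξ) + M.nabla X M.ξ := by
    linear_combination (norm := module) -hM
  have e2 : M.g M.ξ (M.θ M.ξ) • M.θ (M.nabla (M.θ X) M.ξ)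
      = M.g M.ξ (M.θ M.ξ) • M.nabla X M.ξ := by
    rw [e]
    simp only [smul_add, smul_smul]
    rw [M.c_sq]
    simp only [zero_smul, zero_add]
  linear_combination (norm := module) hM' - e2
end
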